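/- A function f(z) = z - Σ_{n≥2} a_n z^n with a_n ≥ 0 is starlike of order α (i.e., Re(z f'(z)/f(z)) > α on U) if and only if Σ_{n≥2} (n-α) a_n ≤ 1-α. -/

import Mathlib

open Complex

private lemma normNat1 (n : ℕ) : ‖(((n : ℝ) : ℂ) + 1)‖ = (n : ℝ) + 1 := by
  have h : (((n : ℝ) : ℂ) + 1) = ((((n : ℝ) + 1 : ℝ)) : ℂ) := by push_cast; ring
  rw [h, Complex.norm_real, Real.norm_eq_abs, _root_.abs_of_nonneg (by positivity)]

private lemma geomAux {q : ℝ} (hq0 : 0 ≤ q) (hq1 : q < 1) :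
    Summable fun n : ℕ => ((n : ℝ) + 2) * q ^ (n + 1) := by
  have h1 : Summable fun n : ℕ => (n : ℝ) ^ 1 * q ^ n :=
    summable_pow_mul_geometric_of_norm_lt_one 1
      (by rwa [Real.norm_eq_abs, _root_.abs_of_nonneg hq0])
  have h2 : Summable fun n : ℕ => q ^ n := summable_geometric_of_lt_one hq0 hq1
  have h3 := (h1.add (h2.mul_left 2)).mul_left q
  refine h3.congr fun n => ?_
  ring

private lemma sumAux {a : ℕ → ℝ} (ha : ∀ n, 0 ≤ a n)
    (hS : ∀ s : ℝ, 0 ≤ s → s < 1 → Summable fun n : ℕ => a (n + 2) * s ^ (n + 2))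
    {r : ℝ} (hr0 : 0 ≤ r) (hr1 : r < 1) :
    Summable fun n : ℕ => ((n : ℝ) + 2) * a (n + 2) * r ^ (n + 1) := by
  set s : ℝ := (r + 1) / 2 with hs
  have hrs : r < s := by rw [hs]; linarith
  have hs0 : 0 < s := by rw [hs]; linarith
  have hs1 : s < 1 := by rw [hs]; linarith
  clear_value s
  have hsum := hS s hs0.le hs1
  set M := ∑' n : ℕ, a (n + 2) * s ^ (n + 2) with hM
  have hMb : ∀ n : ℕ, a (n + 2) * s ^ (n + 2) ≤ M := fun n =>
    Summable.le_tsum hsum n fun m _ => by have := ha (m + 2); positivity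
  have hq := geomAux (q := r / s) (by positivity) ((div_lt_one hs0).mpr hrs)
  refine Summable.of_nonneg_of_le
    (fun n => by have := ha (n + 2); positivity) (fun n => ?_) (hq.mul_left (M / s))
  have h1 : a (n + 2) ≤ M / s ^ (n + 2) :=
    (le_div_iff₀ (by positivity)).mpr (hMb n)
  calc ((n : ℝ) + 2) * a (n + 2) * r ^ (n + 1)
      ≤ ((n : ℝ) + 2) * (M / s ^ (n + 2)) * r ^ (n + 1) := by
        have hn2 : (0:ℝ) ≤ (n : ℝ) + 2 := by positivity
        have hrp : (0:ℝ) ≤ r ^ (n + 1) := by positivity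
        exact mul_le_mul_of_nonneg_right (mul_le_mul_of_nonneg_left h1 hn2) hrp
    _ = M / s * (((n : ℝ) + 2) * (r / s) ^ (n + 1)) := by
        rw [div_pow]
        have h2 : s ^ (n + 2) = s ^ (n + 1) * s := by ring
        rw [h2]
        field_simp

private lemma derivAux {f : ℂ → ℂ} {a : ℕ → ℝ}
    (ha : ∀ n, 0 ≤ a n)
    (hS : ∀ s : ℝ, 0 ≤ s → s < 1 → Summable fun n : ℕ => a (n + 2) * s ^ (n + 2))
    (hf : ∀ z ∈ Metric.ball (0 : ℂ) 1,
      HasSum (fun n : ℕ => ((a (n + 2) : ℝ) : ℂ) * z ^ (n + 2)) (z - f z))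
    {z : ℂ} (hz : z ∈ Metric.ball (0 : ℂ) 1) :
    HasDerivAt f
      (1 - ∑' n : ℕ, ((a (n + 2) : ℝ) : ℂ) * (((n + 2 : ℕ) : ℂ) * z ^ (n + 1))) z := by
  have hz1 : ‖z‖ < 1 := by simpa [Metric.mem_ball] using hz
  have h0z : (0:ℝ) ≤ ‖z‖ := norm_nonneg z
  set ρ : ℝ := (‖z‖ + 1) / 2 with hρ
  have hzρ : ‖z‖ < ρ := by rw [hρ]; linarith
  have hρ1 : ρ < 1 := by rw [hρ]; linarith
  have hρ0 : 0 < ρ := by rw [hρ]; linarith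
  have hu : Summable fun n : ℕ => ((n : ℝ) + 2) * a (n + 2) * ρ ^ (n + 1) :=
    sumAux ha hS hρ0.le hρ1
  have key := hasDerivAt_tsum_of_isPreconnected (𝕜 := ℂ) (F := ℂ)
      (g := fun (n : ℕ) (w : ℂ) => ((a (n + 2) : ℝ) : ℂ) * w ^ (n + 2))
      (g' := fun (n : ℕ) (w : ℂ) =>
        ((a (n + 2) : ℝ) : ℂ) * (((n + 2 : ℕ) : ℂ) * w ^ (n + 1)))
      (u := fun n : ℕ => ((n : ℝ) + 2) * a (n + 2) * ρ ^ (n + 1))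
      (t := Metric.ball (0 : ℂ) ρ) (y₀ := 0) (y := z)
      hu Metric.isOpen_ball (convex_ball _ _).isPreconnected
      (fun n w _ => by
        simpa using (hasDerivAt_pow (n + 2) w).const_mul ((a (n + 2) : ℝ) : ℂ))
      (fun n w hw => by
        have hw' : ‖w‖ < ρ := by simpa [Metric.mem_ball] using hw
        have h1 : ‖((a (n + 2) : ℝ) : ℂ) * (((n + 2 : ℕ) : ℂ) * w ^ (n + 1))‖
            = a (n + 2) * (((n : ℝ) + 2) * ‖w‖ ^ (n + 1)) := by
          rw [norm_mul, norm_mul, norm_pow, Complex.norm_real, Real.norm_eq_abs,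
            _root_.abs_of_nonneg (ha (n + 2)), Complex.norm_natCast]
          push_cast
          ring
        rw [h1]
        have h2 : ‖w‖ ^ (n + 1) ≤ ρ ^ (n + 1) :=
          pow_le_pow_left₀ (norm_nonneg w) hw'.le (n + 1)
        calc a (n + 2) * (((n : ℝ) + 2) * ‖w‖ ^ (n + 1))
            ≤ a (n + 2) * (((n : ℝ) + 2) * ρ ^ (n + 1)) :=
              mul_le_mul_of_nonneg_left
                (mul_le_mul_of_nonneg_left h2 (by positivity)) (ha _)
          _ = ((n : ℝ) + 2) * a (n + 2) * ρ ^ (n + 1) := by ring)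
      (by simpa [Metric.mem_ball] using hρ0)
      (by
        refine Summable.congr summable_zero fun n => ?_
        simp)
      (by simpa [Metric.mem_ball] using hzρ)
  have heq : f =ᶠ[nhds z]
      fun w : ℂ => w - ∑' n : ℕ, ((a (n + 2) : ℝ) : ℂ) * w ^ (n + 2) := by
    filter_upwards [Metric.isOpen_ball.mem_nhds hz] with w hw
    have h3 := (hf w hw).tsum_eq
    rw [h3]; ring
  have hD : HasDerivAt
      (fun w : ℂ => w - ∑' n : ℕ, ((a (n + 2) : ℝ) : ℂ) * w ^ (n + 2))
      (1 - ∑' n : ℕ, ((a (n + 2) : ℝ) : ℂ) * (((n + 2 : ℕ) : ℂ) * z ^ (n + 1))) z :=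
    (hasDerivAt_id z).sub key
  exact hD.congr_of_eventuallyEq heq

theorem stmt9 (α : ℝ) (hα0 : 0 ≤ α) (hα1 : α < 1)
    (f : ℂ → ℂ) (a : ℕ → ℝ) (ha : ∀ n, 0 ≤ a n)
    (hf : ∀ z ∈ Metric.ball (0 : ℂ) 1,
      HasSum (fun n : ℕ => ((a (n + 2) : ℝ) : ℂ) * z ^ (n + 2)) (z - f z)) :
    (∀ z ∈ Metric.ball (0 : ℂ) 1, z ≠ 0 →
      α < ((z * deriv f z / f z).re)) ↔
    (Summable (fun n : ℕ => (((n : ℝ) + 2) - α) * a (n + 2)) ∧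
    ∑' n : ℕ, (((n : ℝ) + 2) - α) * a (n + 2) ≤ 1 - α) := by
  -- basic real summability from the hypothesis
  have hS : ∀ s : ℝ, 0 ≤ s → s < 1 → Summable fun n : ℕ => a (n + 2) * s ^ (n + 2) := by
    intro s h0 h1
    have hmem : (s : ℂ) ∈ Metric.ball (0 : ℂ) 1 := by
      simp [Metric.mem_ball, Complex.dist_eq, _root_.abs_of_nonneg h0, h1]
    have h2 := (hf (s : ℂ) hmem).summable
    have h3 : Summable fun n : ℕ => ((a (n + 2) * s ^ (n + 2) : ℝ) : ℂ) := by
      refine h2.congr fun n => ?_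
      push_cast
      ring
    exact (RCLike.summable_ofReal ℂ).mp h3
  -- values of f on the real axis
  have hfr : ∀ r : ℝ, 0 ≤ r → r < 1 →
      f (r : ℂ) = ((r - ∑' n : ℕ, a (n + 2) * r ^ (n + 2) : ℝ) : ℂ) := by
    intro r h0 h1
    have hmem : (r : ℂ) ∈ Metric.ball (0 : ℂ) 1 := by
      simp [Metric.mem_ball, Complex.dist_eq, _root_.abs_of_nonneg h0, h1]
    have h2 := (hf (r : ℂ) hmem).tsum_eq
    push_cast
    linear_combination h2
  -- derivative on the real axis
  have hdr : ∀ r : ℝ, 0 ≤ r → r < 1 →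
      deriv f (r : ℂ)
        = ((1 - ∑' n : ℕ, ((n : ℝ) + 2) * a (n + 2) * r ^ (n + 1) : ℝ) : ℂ) := by
    intro r h0 h1
    have hmem : (r : ℂ) ∈ Metric.ball (0 : ℂ) 1 := by
      simp [Metric.mem_ball, Complex.dist_eq, _root_.abs_of_nonneg h0, h1]
    rw [(derivAux ha hS hf hmem).deriv]
    push_cast
    congr 1
    exact tsum_congr fun n => by push_cast; ring
  constructor
  · -- forward direction
    intro h
    have hc0 : ∀ n : ℕ, 0 ≤ (((n : ℝ) + 2) - α) * a (n + 2) := by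
      intro n
      have h1 : (0:ℝ) ≤ (n : ℝ) := Nat.cast_nonneg n
      exact mul_nonneg (by linarith) (ha (n + 2))
    -- summability of χ-terms
    have hχs : ∀ r : ℝ, 0 ≤ r → r < 1 →
        Summable fun n : ℕ => (((n : ℝ) + 2) - α) * a (n + 2) * r ^ (n + 1) := by
      intro r h0 h1
      refine Summable.of_nonneg_of_le
        (fun n => mul_nonneg (hc0 n) (by positivity)) (fun n => ?_)
        (sumAux ha hS h0 h1)
      have h2 : (((n : ℝ) + 2) - α) ≤ ((n : ℝ) + 2) := by linarith
      have h3 : (0:ℝ) ≤ a (n + 2) * r ^ (n + 1) := by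
        have := ha (n + 2); positivity
      calc (((n : ℝ) + 2) - α) * a (n + 2) * r ^ (n + 1)
          = (((n : ℝ) + 2) - α) * (a (n + 2) * r ^ (n + 1)) := by ring
        _ ≤ ((n : ℝ) + 2) * (a (n + 2) * r ^ (n + 1)) :=
            mul_le_mul_of_nonneg_right h2 h3
        _ = ((n : ℝ) + 2) * a (n + 2) * r ^ (n + 1) := by ring
    -- nonvanishing of Q
    have hQne : ∀ r : ℝ, 0 < r → r < 1 →
        (1 - α) - ∑' n : ℕ, (((n : ℝ) + 2) - α) * a (n + 2) * r ^ (n + 1) ≠ 0 := by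
      intro r hr0 hr1
      have hmem : (r : ℂ) ∈ Metric.ball (0 : ℂ) 1 := by
        simp [Metric.mem_ball, Complex.dist_eq, _root_.abs_of_nonneg hr0.le, hr1]
      have hre := h (r : ℂ) hmem (by exact_mod_cast hr0.ne')
      rw [hdr r hr0.le hr1, hfr r hr0.le hr1, ← Complex.ofReal_mul, ← Complex.ofReal_div,
        Complex.ofReal_re] at hre
      set ψ := ∑' n : ℕ, ((n : ℝ) + 2) * a (n + 2) * r ^ (n + 1) with hψ
      set φ := ∑' n : ℕ, a (n + 2) * r ^ (n + 2) with hφ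
      set χ := ∑' n : ℕ, (((n : ℝ) + 2) - α) * a (n + 2) * r ^ (n + 1) with hχ
      -- hre : α < r * (1 - ψ) / (r - φ)
      have hDn : r - φ ≠ 0 := by
        intro h0
        rw [h0, div_zero] at hre
        linarith
      have h2 : 0 < (r * (1 - ψ) - α * (r - φ)) / (r - φ) := by
        have h3 : r * (1 - ψ) / (r - φ) - α = (r * (1 - ψ) - α * (r - φ)) / (r - φ) := by
          field_simp
        have h4 := sub_pos.mpr hre
        rwa [h3] at h4
      have h4 : r * (1 - ψ) - α * (r - φ) = r * ((1 - α) - χ) := by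
        have s1 : Summable (fun n : ℕ => ((n : ℝ) + 2) * a (n + 2) * r ^ (n + 2)) := by
          refine ((sumAux ha hS hr0.le hr1).mul_right r).congr fun n => ?_
          ring
        have s2 : Summable (fun n : ℕ => α * (a (n + 2) * r ^ (n + 2))) :=
          (hS r hr0.le hr1).mul_left α
        have e1 : r * χ = r * ψ - α * φ := by
          rw [hχ, hψ, hφ, ← tsum_mul_left, ← tsum_mul_left, ← tsum_mul_left]
          rw [← Summable.tsum_sub (by
            refine s1.congr fun n => ?_; ring) (by
            refine s2.congr fun n => ?_; ring)]
          exact tsum_congr fun n => by ring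
        linarith [e1]
      intro h0
      rw [h4, h0, mul_zero, zero_div] at h2
      exact lt_irrefl 0 h2
    -- positivity of Q via IVT
    have hQpos : ∀ r : ℝ, 0 < r → r < 1 →
        0 < (1 - α) - ∑' n : ℕ, (((n : ℝ) + 2) - α) * a (n + 2) * r ^ (n + 1) := by
      intro r hr0 hr1
      rcases (hQne r hr0 hr1).lt_or_gt with hneg | hpos
      · exfalso
        set Q : ℝ → ℝ :=
          fun x => (1 - α) - ∑' n : ℕ, (((n : ℝ) + 2) - α) * a (n + 2) * x ^ (n + 1) with hQdef
        have hcont : ContinuousOn Q (Set.Icc 0 r) := by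
          refine continuousOn_const.sub ?_
          refine continuousOn_tsum (fun n => (Continuous.continuousOn (by continuity)))
            (hχs r hr0.le hr1) (fun n x hx => ?_)
          obtain ⟨hx0, hxr⟩ := hx
          rw [Real.norm_eq_abs, abs_mul, _root_.abs_of_nonneg (hc0 n), _root_.abs_pow, _root_.abs_of_nonneg hx0]
          have h2 : x ^ (n + 1) ≤ r ^ (n + 1) := pow_le_pow_left₀ hx0 hxr (n + 1)
          exact mul_le_mul_of_nonneg_left h2 (hc0 n)
        have hQ0 : Q 0 = 1 - α := by
          rw [hQdef]
          simp
        have hQr : Q r < 0 := hneg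
        have hsub := intermediate_value_Icc' hr0.le hcont
        have h0mem : (0:ℝ) ∈ Set.Icc (Q r) (Q 0) := by
          constructor
          · exact hQr.le
          · rw [hQ0]; linarith
        obtain ⟨x, hx, hx0⟩ := hsub h0mem
        have hxne : x ≠ 0 := by
          intro h0
          rw [h0, hQ0] at hx0
          linarith
        have hxpos : 0 < x := lt_of_le_of_ne hx.1 (Ne.symm hxne)
        exact hQne x hxpos (lt_of_le_of_lt hx.2 hr1) hx0
      · linarith [hpos]
    -- bounded partial sums
    have key : ∀ N : ℕ,
        ∑ n ∈ Finset.range N, (((n : ℝ) + 2) - α) * a (n + 2) ≤ 1 - α := by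
      intro N
      by_contra hN
      push_neg at hN
      set L := ∑ n ∈ Finset.range N, (((n : ℝ) + 2) - α) * a (n + 2) with hL
      have hL0 : 0 < L := by linarith
      have ht1 : (1 - α) / L < 1 := (div_lt_one hL0).mpr hN
      have htend : Filter.Tendsto (fun r : ℝ => r ^ N) (nhdsWithin 1 (Set.Iio 1)) (nhds 1) := by
        have h2 : Filter.Tendsto (fun r : ℝ => r ^ N) (nhdsWithin (1:ℝ) (Set.Iio 1))
            (nhds ((1:ℝ) ^ N)) :=
          ((continuous_pow N).tendsto (1 : ℝ)).mono_left nhdsWithin_le_nhds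
        simpa using h2
      have hev : ∀ᶠ r in nhdsWithin (1:ℝ) (Set.Iio 1), (1 - α) / L < r ^ N :=
        htend.eventually (eventually_gt_nhds ht1)
      have hev2 : ∀ᶠ r in nhdsWithin (1:ℝ) (Set.Iio 1), r ∈ Set.Ioo (0:ℝ) 1 :=
        Ioo_mem_nhdsLT_of_mem (by norm_num)
      obtain ⟨r, h1r, hr0, hr1⟩ := (hev.and hev2).exists
      have hQ := hQpos r hr0 hr1
      have h5 : ∑ n ∈ Finset.range N, (((n : ℝ) + 2) - α) * a (n + 2) * r ^ (n + 1)
          ≤ ∑' n : ℕ, (((n : ℝ) + 2) - α) * a (n + 2) * r ^ (n + 1) :=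
        Summable.sum_le_tsum (Finset.range N)
          (fun n _ => mul_nonneg (hc0 n) (by positivity)) (hχs r hr0.le hr1)
      have h6 : r ^ N * L
          ≤ ∑ n ∈ Finset.range N, (((n : ℝ) + 2) - α) * a (n + 2) * r ^ (n + 1) := by
        rw [hL, Finset.mul_sum]
        refine Finset.sum_le_sum fun n hn => ?_
        have hn' : n + 1 ≤ N := Finset.mem_range.mp hn
        have h7 : r ^ N ≤ r ^ (n + 1) := pow_le_pow_of_le_one hr0.le hr1.le hn'
        calc r ^ N * ((((n : ℝ) + 2) - α) * a (n + 2))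
            ≤ r ^ (n + 1) * ((((n : ℝ) + 2) - α) * a (n + 2)) :=
              mul_le_mul_of_nonneg_right h7 (hc0 n)
          _ = (((n : ℝ) + 2) - α) * a (n + 2) * r ^ (n + 1) := by ring
      have h8 : 1 - α < r ^ N * L := by
        have h9 := mul_lt_mul_of_pos_right h1r hL0
        rwa [div_mul_cancel₀ _ hL0.ne'] at h9
      linarith
    exact ⟨summable_of_sum_range_le hc0 key, Real.tsum_le_of_sum_range_le hc0 key⟩
  · -- backward direction
    rintro ⟨hsum, hle⟩ z hz hz0
    have hz1 : ‖z‖ < 1 := by simpa [Metric.mem_ball] using hz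
    set r := ‖z‖ with hr
    have hr0 : 0 < r := norm_pos_iff.mpr hz0
    have hr1 : r < 1 := hz1
    have hsA : Summable fun n : ℕ => ((n : ℝ) + 1) * a (n + 2) := by
      refine hsum.of_nonneg_of_le (fun n => mul_nonneg (by positivity) (ha _)) fun n => ?_
      have h1 : ((n : ℝ) + 1) ≤ ((n : ℝ) + 2) - α := by linarith
      exact mul_le_mul_of_nonneg_right h1 (ha _)
    have hsB : Summable fun n : ℕ => a (n + 2) := by
      refine hsum.of_nonneg_of_le (fun n => ha _) fun n => ?_
      have h1 : (1:ℝ) ≤ ((n : ℝ) + 2) - α := by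
        have : (0:ℝ) ≤ (n : ℝ) := Nat.cast_nonneg n
        linarith
      nlinarith [ha (n + 2)]
    set A := ∑' n : ℕ, ((n : ℝ) + 1) * a (n + 2) with hA
    set B := ∑' n : ℕ, a (n + 2) with hB
    have hA0 : 0 ≤ A := tsum_nonneg fun n => mul_nonneg (by positivity) (ha _)
    have hB0 : 0 ≤ B := tsum_nonneg fun n => ha _
    have hAB : A + (1 - α) * B ≤ 1 - α := by
      have e1 : A + (1 - α) * B = ∑' n : ℕ, (((n : ℝ) + 2) - α) * a (n + 2) := by
        rw [hA, hB, ← tsum_mul_left, ← Summable.tsum_add hsA (hsB.mul_left (1 - α))]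
        exact tsum_congr fun n => by ring
      linarith [e1 ▸ hle]
    have hB1 : B ≤ 1 := by nlinarith
    -- bound |z - f z|
    have hG := hf z hz
    have hnorm : Summable fun n : ℕ => ‖((a (n + 2) : ℝ) : ℂ) * z ^ (n + 2)‖ := by
      refine (hS r hr0.le hr1).congr fun n => ?_
      rw [norm_mul, norm_pow, Complex.norm_real, Real.norm_eq_abs,
        _root_.abs_of_nonneg (ha (n + 2))]
    have habsG : ‖z - f z‖ ≤ B * r ^ 2 := by
      rw [← hG.tsum_eq]
      refine le_trans (norm_tsum_le_tsum_norm hnorm) ?_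
      have h1 : ∑' n : ℕ, ‖((a (n + 2) : ℝ) : ℂ) * z ^ (n + 2)‖
          = ∑' n : ℕ, a (n + 2) * r ^ (n + 2) := by
        refine tsum_congr fun n => ?_
        rw [norm_mul, norm_pow, Complex.norm_real, Real.norm_eq_abs,
          _root_.abs_of_nonneg (ha (n + 2))]
      rw [h1]
      have h2 : ∑' n : ℕ, a (n + 2) * r ^ (n + 2) ≤ ∑' n : ℕ, a (n + 2) * r ^ 2 := by
        refine Summable.tsum_le_tsum (fun n => ?_) (hS r hr0.le hr1) (hsB.mul_right (r ^ 2))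
        have h3 : r ^ (n + 2) ≤ r ^ 2 := pow_le_pow_of_le_one hr0.le hr1.le (by omega)
        exact mul_le_mul_of_nonneg_left h3 (ha _)
      rw [tsum_mul_right, ← hB] at h2
      exact h2
    have hFlow : r - B * r ^ 2 ≤ ‖f z‖ := by
      have h1 := norm_sub_norm_le z (f z)
      linarith
    have hFpos : 0 < r - B * r ^ 2 := by nlinarith
    have hF0 : f z ≠ 0 := by
      intro h0
      rw [h0, norm_zero] at hFlow
      linarith
    -- derivative and the error term
    rw [(derivAux ha hS hf hz).deriv]
    set D := ∑' n : ℕ, ((a (n + 2) : ℝ) : ℂ) * (((n + 2 : ℕ) : ℂ) * z ^ (n + 1)) with hD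
    set G := ∑' n : ℕ, ((a (n + 2) : ℝ) : ℂ) * z ^ (n + 2) with hGdef
    have hfz : f z = z - G := by rw [hGdef, hG.tsum_eq]; ring
    have sG : Summable fun n : ℕ => ((a (n + 2) : ℝ) : ℂ) * z ^ (n + 2) := hG.summable
    have snD : Summable fun n : ℕ =>
        ‖((a (n + 2) : ℝ) : ℂ) * (((n + 2 : ℕ) : ℂ) * z ^ (n + 2))‖ := by
      refine (((sumAux ha hS hr0.le hr1).mul_right r).congr fun n => ?_)
      rw [norm_mul, norm_mul, norm_pow, Complex.norm_real, Real.norm_eq_abs,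
        _root_.abs_of_nonneg (ha (n + 2)), Complex.norm_natCast]
      push_cast
      ring
    have sD : Summable fun n : ℕ =>
        ((a (n + 2) : ℝ) : ℂ) * (((n + 2 : ℕ) : ℂ) * z ^ (n + 2)) :=
      Summable.of_norm snD
    have hE : z * (1 - D) - f z
        = -(∑' n : ℕ, (((n : ℝ) + 1) : ℂ) * ((a (n + 2) : ℝ) : ℂ) * z ^ (n + 2)) := by
      rw [hfz]
      have h1 : z * D = ∑' n : ℕ, ((a (n + 2) : ℝ) : ℂ) * (((n + 2 : ℕ) : ℂ) * z ^ (n + 2)) := by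
        rw [hD, ← tsum_mul_left]
        exact tsum_congr fun n => by ring
      have h2 : z * (1 - D) - (z - G) = G - z * D := by ring
      rw [h2, h1, hGdef, ← Summable.tsum_sub sG sD, ← tsum_neg]
      refine tsum_congr fun n => ?_
      push_cast
      ring
    have hEnorm : ‖z * (1 - D) - f z‖ ≤ A * r ^ 2 := by
      rw [hE, norm_neg]
      have snE : Summable fun n : ℕ =>
          ‖(((n : ℝ) + 1) : ℂ) * ((a (n + 2) : ℝ) : ℂ) * z ^ (n + 2)‖ := by
        refine ((hsA.mul_right (r ^ 2)).of_nonneg_of_le (fun n => norm_nonneg _) fun n => ?_)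
        rw [norm_mul, norm_mul, norm_pow, normNat1, Complex.norm_real, Real.norm_eq_abs,
          _root_.abs_of_nonneg (ha (n + 2))]
        have h3 : r ^ (n + 2) ≤ r ^ 2 := pow_le_pow_of_le_one hr0.le hr1.le (by omega)
        have h4 : (0:ℝ) ≤ ((n : ℝ) + 1) * a (n + 2) := mul_nonneg (by positivity) (ha _)
        calc ((n : ℝ) + 1) * a (n + 2) * r ^ (n + 2)
            ≤ ((n : ℝ) + 1) * a (n + 2) * r ^ 2 := mul_le_mul_of_nonneg_left h3 h4
          _ = ((n : ℝ) + 1) * a (n + 2) * r ^ 2 := rfl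
      refine le_trans (norm_tsum_le_tsum_norm snE) ?_
      have h1 : ∑' n : ℕ, ‖(((n : ℝ) + 1) : ℂ) * ((a (n + 2) : ℝ) : ℂ) * z ^ (n + 2)‖
          = ∑' n : ℕ, ((n : ℝ) + 1) * a (n + 2) * r ^ (n + 2) := by
        refine tsum_congr fun n => ?_
        rw [norm_mul, norm_mul, norm_pow, normNat1, Complex.norm_real, Real.norm_eq_abs,
          _root_.abs_of_nonneg (ha (n + 2))]
      rw [h1]
      have h2 : ∑' n : ℕ, ((n : ℝ) + 1) * a (n + 2) * r ^ (n + 2)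
          ≤ ∑' n : ℕ, ((n : ℝ) + 1) * a (n + 2) * r ^ 2 := by
        refine Summable.tsum_le_tsum (fun n => ?_) ?_ (hsA.mul_right (r ^ 2))
        · have h3 : r ^ (n + 2) ≤ r ^ 2 := pow_le_pow_of_le_one hr0.le hr1.le (by omega)
          exact mul_le_mul_of_nonneg_left h3 (mul_nonneg (by positivity) (ha _))
        · refine ((hsA.mul_right (r ^ 2)).of_nonneg_of_le
            (fun n => mul_nonneg (mul_nonneg (by positivity) (ha _)) (by positivity))
            fun n => ?_)
          have h3 : r ^ (n + 2) ≤ r ^ 2 := pow_le_pow_of_le_one hr0.le hr1.le (by omega)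
          exact mul_le_mul_of_nonneg_left h3 (mul_nonneg (by positivity) (ha _))
      rw [tsum_mul_right, ← hA] at h2
      exact h2
    have hA' : A ≤ (1 - α) * (1 - B) := by nlinarith
    have hkey : ‖z * (1 - D) - f z‖ < (1 - α) * ‖f z‖ := by
      calc ‖z * (1 - D) - f z‖ ≤ A * r ^ 2 := hEnorm
        _ ≤ (1 - α) * (1 - B) * r ^ 2 :=
            mul_le_mul_of_nonneg_right hA' (by positivity)
        _ < (1 - α) * (r - B * r ^ 2) := by
            nlinarith [mul_pos (sub_pos.mpr hα1) (mul_pos hr0 (sub_pos.mpr hr1))]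
        _ ≤ (1 - α) * ‖f z‖ := mul_le_mul_of_nonneg_left hFlow (by linarith)
    have hEF : z * (1 - D) / f z = 1 + (z * (1 - D) - f z) / f z := by
      field_simp
      ring
    rw [hEF, Complex.add_re, Complex.one_re]
    have h8 : ‖(z * (1 - D) - f z) / f z‖ < 1 - α := by
      rw [norm_div]
      exact (div_lt_iff₀ (norm_pos_iff.mpr hF0)).mpr hkey
    have h9 := (abs_le.mp (Complex.abs_re_le_norm ((z * (1 - D) - f z) / f z))).1
    linarith
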